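/- arXiv:2504.03390 — 3 statements merged into one kernel-verified Lean document; each statement's English description precedes it below -/
import Mathlib

section
/- Suppose (H, c, ν) satisfies the Marchenko–Pastur relation. Then for every z̃ ∈ ℂ ∖ ℝ the companion transform s_ν̲(z̃) is nonzero (so φ_{ν,c}(z̃) is defined), and for all z̃₁, z̃₂ ∈ ℂ ∖ ℝ: |φ_{ν,c}(z̃₁) − φ_{ν,c}(z̃₂)| ≥ |z̃₁ − z̃₂| / 2. -/
open MeasureTheory Filter Complex Set

noncomputable section

/-- The Stieltjes transform of a measure on `ℝ`. -/
def St (μ : Measure ℝ) (z : ℂ) : ℂ := ∫ l, ((l : ℂ) - z)⁻¹ ∂μ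

/-- The (topological) support of a measure on `ℝ`. -/
def msupport (μ : Measure ℝ) : Set ℝ := {x : ℝ | ∀ U ∈ nhds x, 0 < μ U}

/-- `(H, c, ν)` satisfies the Marchenko–Pastur relation. -/
def MPRel (H : Measure ℝ) (c : ℝ) (ν : Measure ℝ) : Prop :=
  IsProbabilityMeasure H ∧ H ≠ Measure.dirac 0 ∧
  IsCompact (msupport H) ∧ msupport H ⊆ Set.Ici 0 ∧
  0 < c ∧
  IsProbabilityMeasure ν ∧ ν ≠ Measure.dirac 0 ∧
  IsCompact (msupport ν) ∧ msupport ν ⊆ Set.Ici 0 ∧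
  ∀ z : ℂ, 0 < z.im →
    St ν z = (∫ l, ((l : ℂ) * (1 - (c : ℂ) * z * St ν z - (c : ℂ)) - z)⁻¹ ∂H) ∧
    0 < ((c : ℂ) * St ν z + ((c : ℂ) - 1) / z).im

/-- The map `Φ_{H,c}`. -/
def Phi (H : Measure ℝ) (c : ℝ) (z : ℂ) : ℂ := (1 - (c : ℂ) * z * St H z - (c : ℂ)) * z

/-- The spectral domain `𝔻_{H,c}(∞)`. -/
def Dinf (H : Measure ℝ) (c : ℝ) : Set ℂ := {z : ℂ | 0 < z.im ∧ 0 < (Phi H c z).im}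

/-- The companion transform `s_ν̲`. -/
def sUnder (ν : Measure ℝ) (c : ℝ) (z : ℂ) : ℂ := (c : ℂ) * St ν z - (1 - (c : ℂ)) / z

/-- The map `φ_{ν,c}`. -/
def phiInv (ν : Measure ℝ) (c : ℝ) (z : ℂ) : ℂ := -1 / sUnder ν c z

/-! ### Auxiliary definitions -/

/-- `B H w = ∫ l/(1+lw) dH`. -/
def Bfun (H : Measure ℝ) (w : ℂ) : ℂ := ∫ l, (l : ℂ) * ((1 : ℂ) + l * w)⁻¹ ∂H

/-- `G H w = ∫ l²/|1+lw|² dH`. -/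
def Gfun (H : Measure ℝ) (w : ℂ) : ℝ := ∫ l, l ^ 2 * (Complex.normSq ((1 : ℂ) + l * w))⁻¹ ∂H

/-- `J H w₁ w₂ = ∫ l²/((1+lw₁)(1+lw₂)) dH`. -/
def Jfun (H : Measure ℝ) (w₁ w₂ : ℂ) : ℂ :=
  ∫ l, (l : ℂ) ^ 2 * (((1 : ℂ) + l * w₁)⁻¹ * ((1 : ℂ) + l * w₂)⁻¹) ∂H

/-! ### Support lemmas -/

lemma msupport_compl_null (μ : Measure ℝ) : μ (msupport μ)ᶜ = 0 := by
  have h : ∀ x : ((msupport μ)ᶜ : Set ℝ), ∃ U : Set ℝ, IsOpen U ∧ (x : ℝ) ∈ U ∧ μ U = 0 := by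
    rintro ⟨x, hx⟩
    simp only [msupport, mem_compl_iff, mem_setOf_eq, not_forall] at hx
    obtain ⟨U, hU, hU0⟩ := hx
    refine ⟨interior U, isOpen_interior, mem_interior_iff_mem_nhds.2 hU, ?_⟩
    have h2 : μ (interior U) ≤ μ U := measure_mono (interior_subset : interior U ⊆ U)
    have h3 : μ U = 0 := by
      by_contra hne
      exact hU0 (lt_of_le_of_ne zero_le (Ne.symm hne))
    exact le_antisymm (h3 ▸ h2) zero_le
  choose U hUo hUx hU0 using h
  obtain ⟨T, hTc, hTU⟩ := TopologicalSpace.isOpen_iUnion_countable U hUo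
  have hsub : (msupport μ)ᶜ ⊆ ⋃ i ∈ T, U i := by
    rw [hTU]; exact fun x hx => mem_iUnion.2 ⟨⟨x, hx⟩, hUx _⟩
  refine le_antisymm ?_ zero_le
  calc μ (msupport μ)ᶜ ≤ μ (⋃ i ∈ T, U i) := measure_mono hsub
    _ = 0 := (measure_biUnion_null_iff hTc).2 fun i _ => hU0 i

lemma exists_ae_bound (H : Measure ℝ) (hc : IsCompact (msupport H)) :
    ∃ R : ℝ, ∀ᵐ l ∂H, |l| ≤ R := by
  obtain ⟨R, hR⟩ := hc.isBounded.subset_closedBall 0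
  refine ⟨R, ?_⟩
  have : {l : ℝ | ¬ |l| ≤ R} ⊆ (msupport H)ᶜ := by
    intro l hl hmem
    exact hl (by simpa [Real.dist_eq] using hR hmem)
  exact (measure_mono_null this (msupport_compl_null H))

/-! ### Conjugation lemmas -/

lemma St_conj (μ : Measure ℝ) (z : ℂ) : St μ (starRingEnd ℂ z) = starRingEnd ℂ (St μ z) := by
  rw [St, St, ← integral_conj]
  congr 1; funext l
  rw [map_inv₀, map_sub, Complex.conj_ofReal]

lemma sUnder_conj (ν : Measure ℝ) (c : ℝ) (z : ℂ) :
    sUnder ν c (starRingEnd ℂ z) = starRingEnd ℂ (sUnder ν c z) := by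
  rw [sUnder, sUnder, map_sub, map_mul, map_div₀, St_conj]
  simp [Complex.conj_ofReal]

lemma Bfun_conj (H : Measure ℝ) (w : ℂ) :
    Bfun H (starRingEnd ℂ w) = starRingEnd ℂ (Bfun H w) := by
  rw [Bfun, Bfun, ← integral_conj]
  congr 1; funext l
  simp [map_mul, map_inv₀, map_add, Complex.conj_ofReal]

/-! ### Denominator bounds -/

lemma one_add_ne {w : ℂ} (hw : w.im ≠ 0) (l : ℝ) : (1 : ℂ) + l * w ≠ 0 := by
  intro h
  have him : ((1 : ℂ) + l * w).im = l * w.im := by simp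
  have hre : ((1 : ℂ) + l * w).re = 1 + l * w.re := by simp
  rw [h] at him hre
  simp at him hre
  rcases him with h1 | h2
  · rw [h1] at hre; simp at hre
  · exact hw h2

lemma im_aux (w : ℂ) (l : ℝ) : (((1 : ℂ) + l * w) * (starRingEnd ℂ w)).im = -w.im := by
  rw [add_mul, mul_assoc, Complex.mul_conj]
  simp

lemma norm_one_add_ge {w : ℂ} (hw : w.im ≠ 0) (l : ℝ) :
    |w.im| / ‖w‖ ≤ ‖1 + l * w‖ := by
  have hw0 : w ≠ 0 := fun h => hw (by simp [h])
  have habs : 0 < ‖w‖ := by simpa [norm_pos_iff] using hw0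
  rw [div_le_iff₀ habs]
  calc |w.im| = |(((1 : ℂ) + l * w) * (starRingEnd ℂ w)).im| := by rw [im_aux]; simp
    _ ≤ ‖((1 : ℂ) + l * w) * (starRingEnd ℂ w)‖ := Complex.abs_im_le_norm _
    _ = ‖1 + l * w‖ * ‖w‖ := by rw [norm_mul, Complex.norm_conj]

lemma norm_inv_one_add_le {w : ℂ} (hw : w.im ≠ 0) (l : ℝ) :
    ‖(1 + l * w)⁻¹‖ ≤ ‖w‖ / |w.im| := by
  rw [norm_inv]
  have h1 : 0 < |w.im| := abs_pos.2 hw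
  have hw0 : w ≠ 0 := fun h => hw (by simp [h])
  have habs : 0 < ‖w‖ := by simpa [norm_pos_iff] using hw0
  have h3 : 0 < |w.im| / ‖w‖ := by positivity
  have h4 := inv_anti₀ h3 (norm_one_add_ge hw l)
  calc (‖1 + l * w‖)⁻¹ ≤ (|w.im| / ‖w‖)⁻¹ := h4
    _ = ‖w‖ / |w.im| := by rw [inv_div]

/-! ### Integrability -/

lemma meas_inv (w : ℂ) : Measurable fun l : ℝ => ((1 : ℂ) + l * w)⁻¹ :=
  (measurable_const.add (Complex.measurable_ofReal.mul_const w)).inv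

lemma integrable_f1 (H : Measure ℝ) [IsFiniteMeasure H] {w : ℂ} (hw : w.im ≠ 0) :
    Integrable (fun l : ℝ => ((1 : ℂ) + l * w)⁻¹) H := by
  refine (integrable_const (‖w‖ / |w.im|)).mono'
    (meas_inv w).aestronglyMeasurable ?_
  exact ae_of_all _ fun l => by simpa using norm_inv_one_add_le hw l

lemma integrable_f2 (H : Measure ℝ) [IsFiniteMeasure H] {R : ℝ} (hbd : ∀ᵐ l ∂H, |l| ≤ R)
    {w : ℂ} (hw : w.im ≠ 0) :
    Integrable (fun l : ℝ => (l : ℂ) * ((1 : ℂ) + l * w)⁻¹) H := by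
  refine (integrable_const (R * (‖w‖ / |w.im|))).mono'
    (Complex.measurable_ofReal.mul (meas_inv w)).aestronglyMeasurable ?_
  filter_upwards [hbd] with l hl
  have h0 : (0 : ℝ) ≤ |l| := abs_nonneg l
  rw [norm_mul, Complex.norm_real, Real.norm_eq_abs]
  exact mul_le_mul hl (norm_inv_one_add_le hw l) (norm_nonneg _) (le_trans h0 hl)

lemma integrable_f3 (H : Measure ℝ) [IsFiniteMeasure H] {R : ℝ} (hbd : ∀ᵐ l ∂H, |l| ≤ R)
    {w₁ w₂ : ℂ} (hw₁ : w₁.im ≠ 0) (hw₂ : w₂.im ≠ 0) :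
    Integrable (fun l : ℝ => (l : ℂ) ^ 2 * (((1 : ℂ) + l * w₁)⁻¹ * ((1 : ℂ) + l * w₂)⁻¹)) H := by
  refine (integrable_const (R ^ 2 * (‖w₁‖ / |w₁.im| * (‖w₂‖ / |w₂.im|)))).mono'
    ((Complex.measurable_ofReal.pow_const 2).mul ((meas_inv w₁).mul (meas_inv w₂))).aestronglyMeasurable ?_
  filter_upwards [hbd] with l hl
  have h0 : (0 : ℝ) ≤ |l| := abs_nonneg l
  have hR : (0 : ℝ) ≤ R := le_trans h0 hl
  rw [norm_mul, norm_mul, norm_pow, Complex.norm_real, Real.norm_eq_abs]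
  refine mul_le_mul (pow_le_pow_left₀ h0 hl 2) ?_ (by positivity) (by positivity)
  exact mul_le_mul (norm_inv_one_add_le hw₁ l) (norm_inv_one_add_le hw₂ l) (norm_nonneg _)
    (by positivity)

lemma integrable_g (H : Measure ℝ) [IsFiniteMeasure H] {R : ℝ} (hbd : ∀ᵐ l ∂H, |l| ≤ R)
    {w : ℂ} (hw : w.im ≠ 0) :
    Integrable (fun l : ℝ => l ^ 2 * (Complex.normSq ((1 : ℂ) + l * w))⁻¹) H := by
  refine (integrable_const (R ^ 2 * (‖w‖ / |w.im|) ^ 2)).mono'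
    ((measurable_id.pow_const 2).mul
      ((Complex.continuous_normSq.measurable.comp (measurable_const.add
        (Complex.measurable_ofReal.mul_const w))).inv)).aestronglyMeasurable ?_
  filter_upwards [hbd] with l hl
  have h0 : (0 : ℝ) ≤ |l| := abs_nonneg l
  have hR : (0 : ℝ) ≤ R := le_trans h0 hl
  have hkey : (Complex.normSq ((1 : ℂ) + l * w))⁻¹ ≤ (‖w‖ / |w.im|) ^ 2 := by
    rw [Complex.normSq_eq_norm_sq, ← inv_pow]
    have := norm_inv_one_add_le hw l
    rw [norm_inv] at this
    exact pow_le_pow_left₀ (by positivity) this 2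
  have hns : (0 : ℝ) ≤ (Complex.normSq ((1 : ℂ) + l * w))⁻¹ :=
    inv_nonneg.2 (Complex.normSq_nonneg _)
  rw [Real.norm_eq_abs, abs_mul, _root_.abs_of_nonneg hns]
  have h5 : |l ^ 2| = |l| ^ 2 := by rw [_root_.abs_pow]
  rw [h5]
  exact mul_le_mul (pow_le_pow_left₀ h0 hl 2) hkey hns (by positivity)

/-! ### Key equation -/

lemma sUnder_im_pos {H ν : Measure ℝ} {c : ℝ} (hMP : MPRel H c ν) {z : ℂ} (hz : 0 < z.im) :
    0 < (sUnder ν c z).im := by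
  have h := (hMP.2.2.2.2.2.2.2.2.2 z hz).2
  have he : (c : ℂ) * St ν z + ((c : ℂ) - 1) / z = sUnder ν c z := by
    rw [sUnder]; ring
  rwa [he] at h

lemma sUnder_im_sign {H ν : Measure ℝ} {c : ℝ} (hMP : MPRel H c ν) {z : ℂ} (hz : z.im ≠ 0) :
    0 < z.im * (sUnder ν c z).im := by
  rcases hz.lt_or_gt with hneg | hpos
  · have hz' : 0 < (starRingEnd ℂ z).im := by simpa using hneg
    have h := sUnder_im_pos hMP hz'
    rw [sUnder_conj] at h
    simp only [Complex.conj_im] at h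
    have : (sUnder ν c z).im < 0 := by linarith
    exact mul_pos_of_neg_of_neg hneg this
  · exact mul_pos hpos (sUnder_im_pos hMP hpos)

lemma sUnder_ne_zero {H ν : Measure ℝ} {c : ℝ} (hMP : MPRel H c ν) {z : ℂ} (hz : z.im ≠ 0) :
    sUnder ν c z ≠ 0 := by
  intro h
  have := sUnder_im_sign hMP hz
  rw [h] at this
  simp at this

lemma sUnder_im_ne {H ν : Measure ℝ} {c : ℝ} (hMP : MPRel H c ν) {z : ℂ} (hz : z.im ≠ 0) :
    (sUnder ν c z).im ≠ 0 := by
  intro h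
  have := sUnder_im_sign hMP hz
  rw [h] at this
  simp at this

lemma key_upper (H ν : Measure ℝ) (c : ℝ) (hMP : MPRel H c ν) {z : ℂ} (hz : 0 < z.im) :
    z * sUnder ν c z = -1 + (c : ℂ) * sUnder ν c z * Bfun H (sUnder ν c z) := by
  obtain ⟨R, hbd⟩ := exists_ae_bound H hMP.2.2.1
  haveI : IsProbabilityMeasure H := hMP.1
  have him : 0 < (sUnder ν c z).im := sUnder_im_pos hMP hz
  have huim : (sUnder ν c z).im ≠ 0 := ne_of_gt him
  have hu0 : sUnder ν c z ≠ 0 := fun h => huim (by rw [h]; rfl)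
  have hz0 : z ≠ 0 := fun h => by rw [h] at hz; simp at hz
  set u := sUnder ν c z with hu_def
  set s := St ν z with hs_def
  have hkey : 1 - (c : ℂ) * z * s - (c : ℂ) = -(z * u) := by
    rw [hu_def, sUnder, ← hs_def]
    field_simp
    ring
  have heq1 : s = ∫ l, ((l : ℂ) * (1 - (c : ℂ) * z * s - (c : ℂ)) - z)⁻¹ ∂H :=
    (hMP.2.2.2.2.2.2.2.2.2 z hz).1
  have hint : ∀ l : ℝ, ((l : ℂ) * (1 - (c : ℂ) * z * s - (c : ℂ)) - z)⁻¹
      = (-z)⁻¹ * ((1 : ℂ) + l * u)⁻¹ := by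
    intro l
    rw [hkey, show (l : ℂ) * (-(z * u)) - z = (-z) * ((1 : ℂ) + l * u) by ring, mul_inv]
  have heq2 : s = (-z)⁻¹ * ∫ l, ((1 : ℂ) + l * u)⁻¹ ∂H := by
    rw [heq1]
    simp_rw [hint]
    rw [integral_const_mul]
  have hA : (∫ l, ((1 : ℂ) + l * u)⁻¹ ∂H) = 1 - u * Bfun H u := by
    have hpt : ∀ l : ℝ, ((1 : ℂ) + l * u)⁻¹ + u * ((l : ℂ) * ((1 : ℂ) + l * u)⁻¹) = 1 := by
      intro l
      have hne := one_add_ne huim l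
      field_simp
    have hsum := integral_add (integrable_f1 H huim)
      ((integrable_f2 H hbd huim).const_mul u)
    simp_rw [hpt] at hsum
    rw [integral_const] at hsum
    simp only [probReal_univ, one_smul] at hsum
    rw [integral_const_mul] at hsum
    rw [← Bfun] at hsum
    linear_combination -hsum
  have h1 : u = (c : ℂ) * s - (1 - (c : ℂ)) / z := by rw [hu_def, sUnder, ← hs_def]
  rw [heq2, hA] at h1
  field_simp [hz0] at h1
  have h2 : z * (z * u) = z * (-1 + (c : ℂ) * u * Bfun H u) := by linear_combination z * h1
  exact mul_left_cancel₀ hz0 h2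

lemma key_eq (H ν : Measure ℝ) (c : ℝ) (hMP : MPRel H c ν) {z : ℂ} (hz : z.im ≠ 0) :
    z * sUnder ν c z = -1 + (c : ℂ) * sUnder ν c z * Bfun H (sUnder ν c z) := by
  rcases hz.lt_or_gt with hneg | hpos
  · have hz' : 0 < (starRingEnd ℂ z).im := by simpa using hneg
    have h := key_upper H ν c hMP hz'
    rw [sUnder_conj] at h
    have h2 := congrArg (starRingEnd ℂ) h
    simp only [map_mul, map_add, map_neg, map_one, Complex.conj_conj, Bfun_conj,
      Complex.conj_ofReal] at h2
    exact h2
  · exact key_upper H ν c hMP hpos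

lemma G_bound (H ν : Measure ℝ) (c : ℝ) (hMP : MPRel H c ν) {z : ℂ} (hz : z.im ≠ 0) :
    c * (Complex.normSq (sUnder ν c z) * Gfun H (sUnder ν c z)) < 1 := by
  obtain ⟨R, hbd⟩ := exists_ae_bound H hMP.2.2.1
  haveI : IsProbabilityMeasure H := hMP.1
  have huim : (sUnder ν c z).im ≠ 0 := sUnder_im_ne hMP hz
  have hu0 : sUnder ν c z ≠ 0 := sUnder_ne_zero hMP hz
  have hsign := sUnder_im_sign hMP hz
  have key := key_eq H ν c hMP hz
  set u := sUnder ν c z with hu_def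
  have hns : 0 < Complex.normSq u := Complex.normSq_pos.2 hu0
  -- z = -u⁻¹ + c * B
  have hmul : (-u⁻¹ + (c : ℂ) * Bfun H u) * u = -1 + (c : ℂ) * u * Bfun H u := by
    field_simp
  have hz' : z = -u⁻¹ + (c : ℂ) * Bfun H u := by
    apply mul_right_cancel₀ hu0
    rw [hmul, ← key]
  -- imaginary part of B
  have hBim : (Bfun H u).im = -(u.im * Gfun H u) := by
    have hIm : (∫ l, (l : ℂ) * ((1 : ℂ) + l * u)⁻¹ ∂H).im
        = ∫ l, ((l : ℂ) * ((1 : ℂ) + l * u)⁻¹).im ∂H :=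
      (integral_im (integrable_f2 H hbd huim)).symm
    rw [Bfun, hIm]
    have hpt : ∀ l : ℝ, ((l : ℂ) * ((1 : ℂ) + l * u)⁻¹).im
        = -u.im * (l ^ 2 * (Complex.normSq ((1 : ℂ) + l * u))⁻¹) := by
      intro l
      rw [Complex.mul_im, Complex.inv_im, Complex.inv_re]
      simp only [Complex.ofReal_re, Complex.ofReal_im, Complex.add_im, Complex.one_im,
        Complex.mul_im, Complex.add_re, Complex.one_re, Complex.mul_re]
      field_simp
      ring
    simp_rw [hpt]
    rw [integral_const_mul, Gfun]
    ring
  have himz : z.im = u.im * ((Complex.normSq u)⁻¹ - c * Gfun H u) := by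
    rw [hz']
    simp only [Complex.add_im, Complex.neg_im, Complex.inv_im, Complex.mul_im,
      Complex.ofReal_re, Complex.ofReal_im, hBim]
    field_simp
    ring
  have hprod : 0 < u.im ^ 2 * ((Complex.normSq u)⁻¹ - c * Gfun H u) := by
    have := hsign
    rw [himz] at this
    nlinarith [this]
  have hpos2 : 0 < (Complex.normSq u)⁻¹ - c * Gfun H u := by
    have h2 : 0 < u.im ^ 2 := by positivity
    nlinarith
  have h3 : c * Gfun H u < (Complex.normSq u)⁻¹ := by linarith
  calc c * (Complex.normSq u * Gfun H u) = (c * Gfun H u) * Complex.normSq u := by ring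
    _ < (Complex.normSq u)⁻¹ * Complex.normSq u := by
        exact mul_lt_mul_of_pos_right h3 hns
    _ = 1 := inv_mul_cancel₀ (ne_of_gt hns)

lemma z_eq (H ν : Measure ℝ) (c : ℝ) (hMP : MPRel H c ν) {z : ℂ} (hz : z.im ≠ 0) :
    z = -(sUnder ν c z)⁻¹ + (c : ℂ) * Bfun H (sUnder ν c z) := by
  have hu0 : sUnder ν c z ≠ 0 := sUnder_ne_zero hMP hz
  have key := key_eq H ν c hMP hz
  set u := sUnder ν c z with hu_def
  have hmul : (-u⁻¹ + (c : ℂ) * Bfun H u) * u = -1 + (c : ℂ) * u * Bfun H u := by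
    field_simp
  apply mul_right_cancel₀ hu0
  rw [hmul, ← key]

theorem stmt15 (H ν : MeasureTheory.Measure ℝ) (c : ℝ) (hMP : MPRel H c ν) :
    (∀ z : ℂ, z.im ≠ 0 → sUnder ν c z ≠ 0) ∧
    ∀ z₁ z₂ : ℂ, z₁.im ≠ 0 → z₂.im ≠ 0 →
      ‖z₁ - z₂‖ / 2 ≤ ‖phiInv ν c z₁ - phiInv ν c z₂‖ := by
  refine ⟨fun z hz => sUnder_ne_zero hMP hz, ?_⟩
  intro z₁ z₂ h₁ h₂
  obtain ⟨R, hbd⟩ := exists_ae_bound H hMP.2.2.1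
  haveI : IsProbabilityMeasure H := hMP.1
  have hc : 0 < c := hMP.2.2.2.2.1
  have hu₁ : sUnder ν c z₁ ≠ 0 := sUnder_ne_zero hMP h₁
  have hu₂ : sUnder ν c z₂ ≠ 0 := sUnder_ne_zero hMP h₂
  have hi₁ : (sUnder ν c z₁).im ≠ 0 := sUnder_im_ne hMP h₁
  have hi₂ : (sUnder ν c z₂).im ≠ 0 := sUnder_im_ne hMP h₂
  have hG₁ := G_bound H ν c hMP h₁
  have hG₂ := G_bound H ν c hMP h₂
  have hzeq₁ := z_eq H ν c hMP h₁
  have hzeq₂ := z_eq H ν c hMP h₂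
  set u₁ := sUnder ν c z₁ with hu₁_def
  set u₂ := sUnder ν c z₂ with hu₂_def
  -- difference of B's
  have hBdiff : Bfun H u₁ - Bfun H u₂ = (u₂ - u₁) * Jfun H u₁ u₂ := by
    rw [Bfun, Bfun, ← integral_sub (integrable_f2 H hbd hi₁) (integrable_f2 H hbd hi₂)]
    have hpt : ∀ l : ℝ, (l : ℂ) * ((1 : ℂ) + l * u₁)⁻¹ - (l : ℂ) * ((1 : ℂ) + l * u₂)⁻¹
        = (u₂ - u₁) * ((l : ℂ) ^ 2 * (((1 : ℂ) + l * u₁)⁻¹ * ((1 : ℂ) + l * u₂)⁻¹)) := by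
      intro l
      have hne₁ := one_add_ne hi₁ l
      have hne₂ := one_add_ne hi₂ l
      field_simp
      ring
    simp_rw [hpt]
    rw [integral_const_mul, Jfun]
  -- the key factorization
  have hzz : z₁ - z₂ = (phiInv ν c z₁ - phiInv ν c z₂)
      * (1 - (c : ℂ) * (u₁ * u₂) * Jfun H u₁ u₂) := by
    have hphi : phiInv ν c z₁ - phiInv ν c z₂ = -u₁⁻¹ + u₂⁻¹ := by
      rw [phiInv, phiInv, ← hu₁_def, ← hu₂_def]
      ring
    rw [hphi]
    conv_lhs => rw [hzeq₁, hzeq₂]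
    field_simp
    linear_combination (c : ℂ) * u₁ * u₂ * hBdiff
  -- bound on |J|
  have hJ : ‖Jfun H u₁ u₂‖
      ≤ ∫ l, l ^ 2 * (‖(1 : ℂ) + l * u₁‖)⁻¹ * (‖(1 : ℂ) + l * u₂‖)⁻¹ ∂H := by
    rw [Jfun]
    refine le_trans (norm_integral_le_integral_norm _) (le_of_eq ?_)
    congr 1
    funext l
    rw [norm_mul, norm_mul, norm_pow, norm_inv, norm_inv, Complex.norm_real, Real.norm_eq_abs]
    rw [_root_.sq_abs]
    ring
  -- the quantitative bound
  have hmain : c * (‖u₁‖ * ‖u₂‖) * ‖Jfun H u₁ u₂‖ < 1 := by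
    have hK : 0 ≤ c * (‖u₁‖ * ‖u₂‖) := by positivity
    have step1 : c * (‖u₁‖ * ‖u₂‖) * ‖Jfun H u₁ u₂‖
        ≤ ∫ l, c * (‖u₁‖ * ‖u₂‖)
            * (l ^ 2 * (‖(1 : ℂ) + l * u₁‖)⁻¹ * (‖(1 : ℂ) + l * u₂‖)⁻¹) ∂H := by
      rw [integral_const_mul]
      exact mul_le_mul_of_nonneg_left (by simpa [mul_assoc] using hJ) hK
    have hint1 : Integrable (fun l : ℝ => c * (‖u₁‖ * ‖u₂‖)
        * (l ^ 2 * (‖(1 : ℂ) + l * u₁‖)⁻¹ * (‖(1 : ℂ) + l * u₂‖)⁻¹)) H := by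
      refine Integrable.const_mul ?_ _
      have h3 := (integrable_f3 H hbd hi₁ hi₂).norm
      refine h3.congr ?_
      refine ae_of_all _ fun l => ?_
      simp only [norm_mul, norm_pow, norm_inv, Complex.norm_real, Real.norm_eq_abs,
        _root_.sq_abs]
      ring
    have hint2 : Integrable (fun l : ℝ => c / 2 * (Complex.normSq u₁
          * (l ^ 2 * (Complex.normSq ((1 : ℂ) + l * u₁))⁻¹))
        + c / 2 * (Complex.normSq u₂ * (l ^ 2 * (Complex.normSq ((1 : ℂ) + l * u₂))⁻¹))) H := by
      refine Integrable.add ?_ ?_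
      · exact (((integrable_g H hbd hi₁).const_mul _).const_mul _)
      · exact (((integrable_g H hbd hi₂).const_mul _).const_mul _)
    have step2 : (∫ l, c * (‖u₁‖ * ‖u₂‖)
            * (l ^ 2 * (‖(1 : ℂ) + l * u₁‖)⁻¹ * (‖(1 : ℂ) + l * u₂‖)⁻¹) ∂H)
        ≤ ∫ l, (c / 2 * (Complex.normSq u₁ * (l ^ 2 * (Complex.normSq ((1 : ℂ) + l * u₁))⁻¹))
            + c / 2 * (Complex.normSq u₂ * (l ^ 2 * (Complex.normSq ((1 : ℂ) + l * u₂))⁻¹))) ∂H := by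
      refine integral_mono hint1 hint2 fun l => ?_
      have e₁ : (Complex.normSq ((1 : ℂ) + l * u₁))⁻¹
          = ((‖(1 : ℂ) + l * u₁‖)⁻¹) ^ 2 := by
        rw [← Complex.sq_norm, ← inv_pow]
      have e₂ : (Complex.normSq ((1 : ℂ) + l * u₂))⁻¹
          = ((‖(1 : ℂ) + l * u₂‖)⁻¹) ^ 2 := by
        rw [← Complex.sq_norm, ← inv_pow]
      have e₃ : Complex.normSq u₁ = ‖u₁‖ ^ 2 := (Complex.sq_norm u₁).symm
      have e₄ : Complex.normSq u₂ = ‖u₂‖ ^ 2 := (Complex.sq_norm u₂).symm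
      rw [e₁, e₂, e₃, e₄]
      set x := ‖u₁‖ * l * (‖(1 : ℂ) + l * u₁‖)⁻¹ with hx
      set y := ‖u₂‖ * l * (‖(1 : ℂ) + l * u₂‖)⁻¹ with hy
      have hxy : c * (‖u₁‖ * ‖u₂‖)
          * (l ^ 2 * (‖(1 : ℂ) + l * u₁‖)⁻¹ * (‖(1 : ℂ) + l * u₂‖)⁻¹)
          = c * (x * y) := by rw [hx, hy]; ring
      have hrhs : c / 2 * (‖u₁‖ ^ 2 * (l ^ 2 * ((‖(1 : ℂ) + l * u₁‖)⁻¹) ^ 2))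
          + c / 2 * (‖u₂‖ ^ 2 * (l ^ 2 * ((‖(1 : ℂ) + l * u₂‖)⁻¹) ^ 2))
          = c / 2 * x ^ 2 + c / 2 * y ^ 2 := by rw [hx, hy]; ring
      rw [hxy, hrhs]
      nlinarith [mul_nonneg (by linarith : (0:ℝ) ≤ c / 2) (sq_nonneg (x - y))]
    have step3 : (∫ l, (c / 2 * (Complex.normSq u₁ * (l ^ 2 * (Complex.normSq ((1 : ℂ) + l * u₁))⁻¹))
            + c / 2 * (Complex.normSq u₂ * (l ^ 2 * (Complex.normSq ((1 : ℂ) + l * u₂))⁻¹))) ∂H)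
        = c / 2 * (Complex.normSq u₁ * Gfun H u₁) + c / 2 * (Complex.normSq u₂ * Gfun H u₂) := by
      rw [integral_add]
      · congr 1
        · rw [integral_const_mul, integral_const_mul, Gfun]
        · rw [integral_const_mul, integral_const_mul, Gfun]
      · exact (((integrable_g H hbd hi₁).const_mul _).const_mul _)
      · exact (((integrable_g H hbd hi₂).const_mul _).const_mul _)
    have : c * (‖u₁‖ * ‖u₂‖) * ‖Jfun H u₁ u₂‖
        ≤ c / 2 * (Complex.normSq u₁ * Gfun H u₁) + c / 2 * (Complex.normSq u₂ * Gfun H u₂) :=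
      (step1.trans step2).trans (le_of_eq step3)
    nlinarith [hG₁, hG₂]
  -- conclude
  have habsX : ‖(c : ℂ) * (u₁ * u₂) * Jfun H u₁ u₂‖ < 1 := by
    rw [norm_mul, norm_mul, norm_mul, Complex.norm_real, Real.norm_eq_abs, abs_of_pos hc]
    exact hmain
  have h2 : ‖1 - (c : ℂ) * (u₁ * u₂) * Jfun H u₁ u₂‖ < 2 := by
    calc ‖1 - (c : ℂ) * (u₁ * u₂) * Jfun H u₁ u₂‖
        ≤ ‖(1 : ℂ)‖ + ‖(c : ℂ) * (u₁ * u₂) * Jfun H u₁ u₂‖ := by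
          simpa using norm_sub_le (1 : ℂ) ((c : ℂ) * (u₁ * u₂) * Jfun H u₁ u₂)
      _ < 1 + 1 := by
          have h5 : ‖(1 : ℂ)‖ = 1 := norm_one
          rw [h5]
          linarith [habsX]
      _ = 2 := by norm_num
  calc ‖z₁ - z₂‖ / 2
      = ‖phiInv ν c z₁ - phiInv ν c z₂‖
        * ‖1 - (c : ℂ) * (u₁ * u₂) * Jfun H u₁ u₂‖ / 2 := by rw [hzz, norm_mul]
    _ ≤ ‖phiInv ν c z₁ - phiInv ν c z₂‖ * 2 / 2 := by
        have := mul_le_mul_of_nonneg_left h2.le (norm_nonneg (phiInv ν c z₁ - phiInv ν c z₂))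
        linarith
    _ = ‖phiInv ν c z₁ - phiInv ν c z₂‖ := by ring
end
end

section
/- Let H be a probability measure on ℝ with compact support contained in [0,∞) and let c > 0. Then Φ_{H,c} is 2-Lipschitz on 𝔻_{H,c}(∞) ∪ {z̄ : z ∈ 𝔻_{H,c}(∞)}: for all z₁, z₂ in this set, |Φ_{H,c}(z₁) − Φ_{H,c}(z₂)| ≤ 2·|z₁ − z₂|. -/
open MeasureTheory Filter Complex Set

noncomputable section

namespace S16

/-- `g z l = l / (l - z)` -/
def g (z : ℂ) (l : ℝ) : ℂ := (l:ℂ) * ((l:ℂ) - z)⁻¹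

lemma sub_ne (z : ℂ) (hz : z.im ≠ 0) (l : ℝ) : (l:ℂ) - z ≠ 0 := by
  intro h
  have := congrArg Complex.im h
  simp at this
  exact hz this

lemma abs_im_le (z : ℂ) (l : ℝ) : |z.im| ≤ ‖(l:ℂ) - z‖ := by
  have := Complex.abs_im_le_norm ((l:ℂ) - z)
  simpa [Complex.sub_im] using this

lemma norm_g_le (z : ℂ) (hz : z.im ≠ 0) (l : ℝ) :
    ‖g z l‖ ≤ 1 + ‖z‖ / |z.im| := by
  have hne : (l:ℂ) - z ≠ 0 := sub_ne z hz l
  have him : 0 < |z.im| := abs_pos.mpr hz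
  have h1 : g z l = 1 + z * ((l:ℂ) - z)⁻¹ := by
    rw [g]
    field_simp
    ring
  rw [h1]
  calc ‖1 + z * ((l:ℂ)-z)⁻¹‖ ≤ ‖(1:ℂ)‖ + ‖z * ((l:ℂ)-z)⁻¹‖ := norm_add_le _ _
    _ = 1 + ‖z‖ * (‖(l:ℂ)-z‖)⁻¹ := by
        simp [map_mul, map_inv₀]
    _ ≤ 1 + ‖z‖ / |z.im| := by
        rw [div_eq_mul_inv]
        gcongr
        exact abs_im_le z l

lemma continuous_g (z : ℂ) (hz : z.im ≠ 0) : Continuous (g z) := by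
  apply Continuous.mul Complex.continuous_ofReal
  exact ((Complex.continuous_ofReal.sub continuous_const).inv₀ (fun l => sub_ne z hz l))

lemma norm_g_nonneg_bound (z : ℂ) : (0:ℝ) ≤ 1 + ‖z‖ / |z.im| := by positivity

variable (H : Measure ℝ)

lemma integrable_g_mul_g [IsFiniteMeasure H] (z₁ z₂ : ℂ) (h1 : z₁.im ≠ 0) (h2 : z₂.im ≠ 0) :
    Integrable (fun l => g z₁ l * g z₂ l) H := by
  apply Integrable.mono' (integrable_const ((1 + ‖z₁‖ / |z₁.im|) * (1 + ‖z₂‖ / |z₂.im|)))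
  · exact ((continuous_g z₁ h1).mul (continuous_g z₂ h2)).aestronglyMeasurable
  · filter_upwards with l
    rw [norm_mul]
    exact mul_le_mul (norm_g_le z₁ h1 l) (norm_g_le z₂ h2 l) (norm_nonneg _) (norm_g_nonneg_bound z₁)

lemma integrable_sq_norm_g [IsFiniteMeasure H] (z : ℂ) (hz : z.im ≠ 0) :
    Integrable (fun l => ‖g z l‖^2) H := by
  apply Integrable.mono' (integrable_const ((1 + ‖z‖ / |z.im|)^2))
  · exact ((continuous_g z hz).norm.pow 2).aestronglyMeasurable
  · filter_upwards with l
    rw [Real.norm_eq_abs, _root_.abs_of_nonneg (by positivity)]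
    exact pow_le_pow_left₀ (norm_nonneg _) (norm_g_le z hz l) 2

lemma integrable_sq_inv [IsFiniteMeasure H] (z : ℂ) (hz : z.im ≠ 0) :
    Integrable (fun l : ℝ => z^2 * ((l:ℂ) - z)⁻¹) H := by
  apply Integrable.mono' (integrable_const (‖z‖^2 / |z.im|))
  · exact (continuous_const.mul ((Complex.continuous_ofReal.sub continuous_const).inv₀
      (fun l => sub_ne z hz l))).aestronglyMeasurable
  · filter_upwards with l
    have him : 0 < |z.im| := abs_pos.mpr hz
    rw [norm_mul, norm_inv, div_eq_mul_inv]
    have h1 : ‖z^2‖ = ‖z‖^2 := by simp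
    rw [h1]
    have h2 : ‖(l:ℂ) - z‖⁻¹ ≤ |z.im|⁻¹ :=
      inv_anti₀ him (by simpa using abs_im_le z l)
    exact mul_le_mul_of_nonneg_left h2 (by positivity)

/-- pointwise imaginary part formula -/
lemma im_pointwise (z : ℂ) (hz : z.im ≠ 0) (l : ℝ) :
    (z^2 * ((l:ℂ) - z)⁻¹).im = z.im * ‖g z l‖^2 - z.im := by
  have hne : (l:ℂ) - z ≠ 0 := sub_ne z hz l
  have hns : Complex.normSq ((l:ℂ) - z) ≠ 0 := by
    simpa [Complex.normSq_eq_zero] using hne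
  have hg : ‖g z l‖^2 = l^2 / Complex.normSq ((l:ℂ) - z) := by
    rw [g, Complex.sq_norm, Complex.normSq_mul, Complex.normSq_inv]
    simp [Complex.normSq_ofReal, div_eq_mul_inv, pow_two]
  have hNv : Complex.normSq ((l:ℂ) - z) = (l - z.re)^2 + z.im^2 := by
    rw [Complex.normSq_apply]
    simp only [Complex.sub_re, Complex.sub_im, Complex.ofReal_re, Complex.ofReal_im]
    ring
  have hNne : (l - z.re)^2 + z.im^2 ≠ 0 := hNv ▸ hns
  rw [hg, sq, Complex.mul_im, Complex.inv_re, Complex.inv_im, Complex.mul_re, Complex.mul_im, hNv]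
  simp only [Complex.sub_re, Complex.sub_im, Complex.ofReal_re, Complex.ofReal_im]
  field_simp
  ring

/-- Phi expansion -/
lemma phi_eq [IsProbabilityMeasure H] (c : ℝ) (z : ℂ) :
    Phi H c z = z - (c:ℂ) * z - (c:ℂ) * ∫ l, z^2 * ((l:ℂ) - z)⁻¹ ∂H := by
  have hI : (∫ l, z^2 * ((l:ℂ) - z)⁻¹ ∂H) = z^2 * St H z :=
    MeasureTheory.integral_const_mul _ _
  rw [hI, Phi, St]
  ring

lemma im_phi [IsProbabilityMeasure H] (c : ℝ) (z : ℂ) (hz : z.im ≠ 0) :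
    (Phi H c z).im = z.im * (1 - c * ∫ l, ‖g z l‖^2 ∂H) := by
  rw [phi_eq H c z]
  have hint : Integrable (fun l : ℝ => z^2 * ((l:ℂ) - z)⁻¹) H := integrable_sq_inv H z hz
  have him : (∫ l, z^2 * ((l:ℂ) - z)⁻¹ ∂H).im = ∫ l, (z^2 * ((l:ℂ) - z)⁻¹).im ∂H :=
    (integral_im hint).symm
  have h2 : (∫ l, (z^2 * ((l:ℂ) - z)⁻¹).im ∂H) = z.im * (∫ l, ‖g z l‖^2 ∂H) - z.im := by
    have : (fun l : ℝ => (z^2 * ((l:ℂ) - z)⁻¹).im) = fun l : ℝ => z.im * ‖g z l‖^2 - z.im := by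
      funext l; exact im_pointwise z hz l
    rw [this, integral_sub ((integrable_sq_norm_g H z hz).const_mul z.im) (integrable_const z.im),
      MeasureTheory.integral_const_mul, integral_const]
    simp
  simp only [Complex.sub_im, Complex.mul_im, Complex.ofReal_re, Complex.ofReal_im,
    zero_mul, mul_zero, sub_zero, zero_sub, add_zero, zero_add]
  rw [him, h2]
  ring

/-- key domain bound -/
lemma key_bound [IsProbabilityMeasure H] (c : ℝ) (hc : 0 < c) (z : ℂ)
    (hz : 0 < z.im) (hPhi : 0 < (Phi H c z).im) :
    c * ∫ l, ‖g z l‖^2 ∂H ≤ 1 := by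
  have h := im_phi H c z (ne_of_gt hz)
  rw [h] at hPhi
  nlinarith [hPhi]

lemma norm_g_conj (z : ℂ) (l : ℝ) : ‖g ((starRingEnd ℂ) z) l‖ = ‖g z l‖ := by
  have : g ((starRingEnd ℂ) z) l = (starRingEnd ℂ) (g z l) := by
    simp [g, map_mul, map_inv₀]
  rw [this]
  simp

lemma key_bound' [IsProbabilityMeasure H] (c : ℝ) (hc : 0 < c) (z : ℂ)
    (hz : z ∈ Dinf H c ∪ (starRingEnd ℂ) '' Dinf H c) :
    z.im ≠ 0 ∧ c * ∫ l, ‖g z l‖^2 ∂H ≤ 1 := by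
  rcases hz with hz | ⟨w, hw, rfl⟩
  · exact ⟨ne_of_gt hz.1, key_bound H c hc z hz.1 hz.2⟩
  · constructor
    · simp only [Complex.conj_im]
      exact neg_ne_zero.mpr (ne_of_gt hw.1)
    · have : (∫ l, ‖g ((starRingEnd ℂ) w) l‖^2 ∂H) = ∫ l, ‖g w l‖^2 ∂H := by
        congr 1; funext l; rw [norm_g_conj]
      rw [this]
      exact key_bound H c hc w hw.1 hw.2

/-- main identity -/
lemma phi_sub [IsProbabilityMeasure H] (c : ℝ) (z₁ z₂ : ℂ) (h1 : z₁.im ≠ 0) (h2 : z₂.im ≠ 0) :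
    Phi H c z₁ - Phi H c z₂ = (z₁ - z₂) * (1 - (c:ℂ) * ∫ l, g z₁ l * g z₂ l ∂H) := by
  rw [phi_eq H c z₁, phi_eq H c z₂]
  have hJ : (∫ l, z₁^2 * ((l:ℂ) - z₁)⁻¹ ∂H) - (∫ l, z₂^2 * ((l:ℂ) - z₂)⁻¹ ∂H)
      = (z₁ - z₂) * ((∫ l, g z₁ l * g z₂ l ∂H) - 1) := by
    rw [← integral_sub (integrable_sq_inv H z₁ h1) (integrable_sq_inv H z₂ h2)]
    have hpt : (fun l : ℝ => z₁^2 * ((l:ℂ) - z₁)⁻¹ - z₂^2 * ((l:ℂ) - z₂)⁻¹)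
        = fun l : ℝ => (z₁ - z₂) * (g z₁ l * g z₂ l - 1) := by
      funext l
      have hn1 := sub_ne z₁ h1 l
      have hn2 := sub_ne z₂ h2 l
      rw [g, g]
      field_simp
      ring
    rw [hpt, MeasureTheory.integral_const_mul,
      integral_sub (integrable_g_mul_g H z₁ z₂ h1 h2) (integrable_const 1), integral_const]
    simp
  have expand : ∀ a b J₁ J₂ I : ℂ, J₁ - J₂ = (a - b) * (I - 1) →
      a - (c:ℂ)*a - (c:ℂ)*J₁ - (b - (c:ℂ)*b - (c:ℂ)*J₂) = (a - b) * (1 - (c:ℂ)*I) := by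
    intro a b J₁ J₂ I h
    have : (c:ℂ)*J₁ - (c:ℂ)*J₂ = (c:ℂ) * ((a-b)*(I-1)) := by rw [← h]; ring
    linear_combination -this
  exact expand z₁ z₂ _ _ _ hJ

end S16

theorem stmt16 (H : MeasureTheory.Measure ℝ) (hprob : IsProbabilityMeasure H)
    (hcomp : IsCompact (msupport H)) (hpos : msupport H ⊆ Set.Ici 0)
    (c : ℝ) (hc : 0 < c) :
    ∀ z₁ ∈ Dinf H c ∪ (starRingEnd ℂ) '' Dinf H c,
      ∀ z₂ ∈ Dinf H c ∪ (starRingEnd ℂ) '' Dinf H c,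
        ‖Phi H c z₁ - Phi H c z₂‖ ≤ 2 * ‖z₁ - z₂‖ := by
  intro z₁ hz₁ z₂ hz₂
  obtain ⟨h1im, h1K⟩ := S16.key_bound' H c hc z₁ hz₁
  obtain ⟨h2im, h2K⟩ := S16.key_bound' H c hc z₂ hz₂
  set I : ℂ := ∫ l, S16.g z₁ l * S16.g z₂ l ∂H with hI
  set K₁ : ℝ := ∫ l, ‖S16.g z₁ l‖^2 ∂H with hK₁
  set K₂ : ℝ := ∫ l, ‖S16.g z₂ l‖^2 ∂H with hK₂
  have habsI : ‖I‖ ≤ (K₁ + K₂) / 2 := by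
    have hnI : ‖I‖ ≤ ∫ l, ‖S16.g z₁ l * S16.g z₂ l‖ ∂H := by
      exact norm_integral_le_integral_norm _
    have hmono : (∫ l, ‖S16.g z₁ l * S16.g z₂ l‖ ∂H)
        ≤ ∫ l, (‖S16.g z₁ l‖^2 + ‖S16.g z₂ l‖^2)/2 ∂H := by
      apply integral_mono (S16.integrable_g_mul_g H z₁ z₂ h1im h2im).norm
        (((S16.integrable_sq_norm_g H z₁ h1im).add (S16.integrable_sq_norm_g H z₂ h2im)).div_const 2)
      intro l
      simp only [Pi.add_apply]
      rw [norm_mul]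
      nlinarith [sq_nonneg (‖S16.g z₁ l‖ - ‖S16.g z₂ l‖), norm_nonneg (S16.g z₁ l),
        norm_nonneg (S16.g z₂ l)]
    have hsplit : (∫ l, (‖S16.g z₁ l‖^2 + ‖S16.g z₂ l‖^2)/2 ∂H) = (K₁ + K₂)/2 := by
      rw [hK₁, hK₂, ← integral_add (S16.integrable_sq_norm_g H z₁ h1im)
        (S16.integrable_sq_norm_g H z₂ h2im), ← integral_div]
    exact hnI.trans (hmono.trans_eq hsplit)
  have hIle : ‖1 - (c:ℂ) * I‖ ≤ 2 := by
    have h1 : ‖1 - (c:ℂ) * I‖ ≤ 1 + ‖(c:ℂ) * I‖ := by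
      simpa using norm_sub_le (1:ℂ) ((c:ℂ) * I)
    have h2 : ‖(c:ℂ) * I‖ = c * ‖I‖ := by
      rw [norm_mul, Complex.norm_real, Real.norm_of_nonneg hc.le]
    have h3 : c * ‖I‖ ≤ c * ((K₁ + K₂)/2) :=
      mul_le_mul_of_nonneg_left habsI hc.le
    have h4 : c * ((K₁ + K₂)/2) = (c * K₁ + c * K₂)/2 := by ring
    rw [h2] at h1
    linarith
  rw [S16.phi_sub H c z₁ z₂ h1im h2im, norm_mul, mul_comm ‖z₁ - z₂‖]
  exact mul_le_mul_of_nonneg_right hIle (norm_nonneg _)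

end
end

section
/- Let H be a probability measure on ℝ with compact support contained in [0,∞) and let c > 0. Then: (i) for every z ∈ 𝔻_{H,c}(∞), c·∫_ℝ λ²/|λ − z|² dH(λ) < 1; and (ii) for all z₁, z₂ in 𝔻_{H,c}(∞) ∪ {z̄ : z ∈ 𝔻_{H,c}(∞)}, the Cauchy–Schwarz bound |c·∫_ℝ λ²/((λ − z₁)(λ − z₂)) dH(λ)| < 1 holds. -/
open MeasureTheory Filter Complex Set

noncomputable section

-- auxiliary lemmas

lemma neZ {z : ℂ} (hz : z.im ≠ 0) (l : ℝ) : (l : ℂ) - z ≠ 0 := by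
  intro h
  have h2 : ((l : ℂ) - z).im = 0 := by rw [h]; rfl
  simp [Complex.sub_im] at h2
  exact hz h2

lemma sq_bound {z : ℂ} (hz : z.im ≠ 0) (l : ℝ) :
    l ^ 2 ≤ (2 + 2 * z.re ^ 2 / z.im ^ 2) * ‖(l : ℂ) - z‖ ^ 2 := by
  have h : ‖(l : ℂ) - z‖ ^ 2 = (l - z.re) ^ 2 + z.im ^ 2 := by
    rw [Complex.sq_norm, Complex.normSq_apply]
    simp [Complex.sub_re, Complex.sub_im]
    ring
  have h2 : (0:ℝ) < z.im ^ 2 := by positivity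
  rw [h]
  have hC : 2 + 2 * z.re ^ 2 / z.im ^ 2 = (2 * z.im ^ 2 + 2 * z.re ^ 2) / z.im ^ 2 := by
    field_simp
  rw [hC, div_mul_eq_mul_div, le_div_iff₀ h2]
  nlinarith [sq_nonneg (l - 2 * z.re), sq_nonneg (l - z.re), sq_nonneg (z.re * z.im), sq_nonneg z.im]

lemma integrable_of_bdd {E : Type*} [NormedAddCommGroup E] {H : Measure ℝ}
    [IsFiniteMeasure H] {f : ℝ → E} (hf : Continuous f) {C : ℝ} (h : ∀ x, ‖f x‖ ≤ C) :
    Integrable f H :=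
  Integrable.mono' (integrable_const C) hf.aestronglyMeasurable (Eventually.of_forall h)

lemma key (H : Measure ℝ) [IsProbabilityMeasure H] (c : ℝ) {z : ℂ} (hz : z.im ≠ 0) :
    z.im * (1 - c * ∫ l, l ^ 2 / ‖(l : ℂ) - z‖ ^ 2 ∂H) = (Phi H c z).im := by
  set f : ℝ → ℝ := fun l => l ^ 2 / ‖(l : ℂ) - z‖ ^ 2 with hf
  set g : ℝ → ℂ := fun l => z ^ 2 * ((l : ℂ) - z)⁻¹ with hg
  have hne := neZ hz
  have hcont0 : Continuous fun l : ℝ => (l : ℂ) - z := Complex.continuous_ofReal.sub continuous_const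
  have hcontf : Continuous f := by
    apply Continuous.div (continuous_pow 2)
    · exact (continuous_norm.comp hcont0).pow 2
    · intro l
      exact pow_ne_zero 2 (norm_ne_zero_iff.mpr (hne l))
  have hcontg : Continuous g := continuous_const.mul (hcont0.inv₀ hne)
  have hboundf : ∀ l : ℝ, ‖f l‖ ≤ 2 + 2 * z.re ^ 2 / z.im ^ 2 := by
    intro l
    have h1 : 0 < ‖(l : ℂ) - z‖ ^ 2 :=
      pow_pos (norm_pos_iff.mpr (hne l)) 2
    rw [Real.norm_of_nonneg (by positivity), hf]
    rw [div_le_iff₀ h1]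
    exact sq_bound hz l
  have hboundg : ∀ l : ℝ, ‖g l‖ ≤ ‖z‖ ^ 2 / |z.im| := by
    intro l
    have h1 : |z.im| ≤ ‖(l : ℂ) - z‖ := by
      have := Complex.abs_im_le_norm ((l : ℂ) - z)
      simpa [Complex.sub_im] using this
    have h2 : (0:ℝ) < |z.im| := abs_pos.mpr hz
    rw [hg]
    simp only [norm_mul, norm_pow]
    rw [norm_inv]
    rw [mul_inv_le_iff₀ (lt_of_lt_of_le h2 h1), div_mul_eq_mul_div, le_div_iff₀ h2]
    exact mul_le_mul_of_nonneg_left h1 (by positivity)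
  have hintf : Integrable f H := integrable_of_bdd hcontf hboundf
  have hintg : Integrable g H := integrable_of_bdd hcontg hboundg
  have hpt : ∀ l : ℝ, z.im * f l = (g l).im + z.im := by
    intro l
    have hden : (l - z.re) ^ 2 + z.im ^ 2 ≠ 0 := by positivity
    have habs : ‖(l : ℂ) - z‖ ^ 2 = (l - z.re) ^ 2 + z.im ^ 2 := by
      rw [Complex.sq_norm, Complex.normSq_apply]
      simp [Complex.sub_re, Complex.sub_im]
      ring
    have hns : Complex.normSq ((l : ℂ) - z) = (l - z.re) ^ 2 + z.im ^ 2 := by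
      rw [Complex.normSq_apply]
      simp [Complex.sub_re, Complex.sub_im]
      ring
    rw [hf, hg]
    simp only [habs, Complex.mul_im, Complex.inv_re, Complex.inv_im, hns,
      Complex.sub_re, Complex.sub_im, Complex.ofReal_re, Complex.ofReal_im, pow_two,
      Complex.mul_re, Complex.mul_im]
    have hden2 : z.im ^ 2 - l * z.re * 2 + l ^ 2 + z.re ^ 2 ≠ 0 := by
      have h0 : (0:ℝ) < (l - z.re) ^ 2 + z.im ^ 2 := by positivity
      intro h; apply ne_of_gt h0; nlinarith
    linear_combination z.im * mul_inv_cancel₀ hden2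
  have hst : z ^ 2 * St H z = ∫ l, g l ∂H := by
    rw [St, ← integral_const_mul]
  have him : (z ^ 2 * St H z).im = ∫ l, (g l).im ∂H := by
    rw [hst]
    simpa using (integral_im hintg).symm
  have hPhi : Phi H c z = z - (c : ℂ) * (z ^ 2 * St H z) - (c : ℂ) * z := by
    rw [Phi]; ring
  have hPhiIm : (Phi H c z).im = z.im - c * (z ^ 2 * St H z).im - c * z.im := by
    rw [hPhi]
    simp [Complex.sub_im, Complex.mul_im]
  have hi1 : ∫ l, z.im * f l ∂H = (∫ l, (g l).im ∂H) + z.im := by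
    rw [show (fun l => z.im * f l) = fun l => (g l).im + z.im from funext hpt]
    have hintgim : Integrable (fun l => (g l).im) H := hintg.im
    rw [integral_add hintgim (integrable_const _)]
    simp
  have hi2 : z.im * ∫ l, f l ∂H = ∫ l, z.im * f l ∂H := (integral_const_mul _ _).symm
  rw [hPhiIm, him]
  have h3 : z.im * (∫ l, f l ∂H) = (∫ l, (g l).im ∂H) + z.im := by rw [hi2, hi1]
  linear_combination (-c) * h3

lemma keylt (H : Measure ℝ) [IsProbabilityMeasure H] (c : ℝ) {z : ℂ}
    (hz : z ∈ Dinf H c) :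
    c * (∫ l, l ^ 2 / ‖(l : ℂ) - z‖ ^ 2 ∂H) < 1 := by
  obtain ⟨h1, h2⟩ := hz
  have hk := key H c (ne_of_gt h1)
  nlinarith

lemma A_conj (H : Measure ℝ) (z : ℂ) :
    (∫ l, l ^ 2 / ‖(l : ℂ) - (starRingEnd ℂ) z‖ ^ 2 ∂H) =
    ∫ l, l ^ 2 / ‖(l : ℂ) - z‖ ^ 2 ∂H := by
  congr 1
  funext l
  have h : (l : ℂ) - (starRingEnd ℂ) z = (starRingEnd ℂ) ((l : ℂ) - z) := by
    rw [map_sub, Complex.conj_ofReal]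
  rw [h, Complex.norm_conj]

theorem stmt17 (H : MeasureTheory.Measure ℝ) (hprob : IsProbabilityMeasure H)
    (hcomp : IsCompact (msupport H)) (hpos : msupport H ⊆ Set.Ici 0)
    (c : ℝ) (hc : 0 < c) :
    (∀ z ∈ Dinf H c,
      c * (∫ l, l ^ 2 / ‖(l : ℂ) - z‖ ^ 2 ∂H) < 1) ∧
    ∀ z₁ ∈ Dinf H c ∪ (starRingEnd ℂ) '' Dinf H c,
      ∀ z₂ ∈ Dinf H c ∪ (starRingEnd ℂ) '' Dinf H c,
        ‖(c : ℂ) *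
          ∫ l, (l : ℂ) ^ 2 / (((l : ℂ) - z₁) * ((l : ℂ) - z₂)) ∂H‖ < 1 := by
  haveI := hprob
  refine ⟨fun z hz => keylt H c hz, ?_⟩
  -- part (ii)
  have hmem : ∀ z ∈ Dinf H c ∪ (starRingEnd ℂ) '' Dinf H c,
      z.im ≠ 0 ∧ c * (∫ l, l ^ 2 / ‖(l : ℂ) - z‖ ^ 2 ∂H) < 1 := by
    rintro z (hz | ⟨w, hw, rfl⟩)
    · exact ⟨ne_of_gt hz.1, keylt H c hz⟩
    · refine ⟨?_, ?_⟩
      · simp only [Complex.conj_im]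
        exact neg_ne_zero.mpr (ne_of_gt hw.1)
      · rw [A_conj]
        exact keylt H c hw
  intro z₁ hz₁ z₂ hz₂
  obtain ⟨him₁, hA₁⟩ := hmem z₁ hz₁
  obtain ⟨him₂, hA₂⟩ := hmem z₂ hz₂
  set u : ℝ → ℝ := fun l => |l| / ‖(l : ℂ) - z₁‖ with hu
  set v : ℝ → ℝ := fun l => |l| / ‖(l : ℂ) - z₂‖ with hv
  have hne₁ := neZ him₁
  have hne₂ := neZ him₂
  have habs_pos : ∀ (z : ℂ), z.im ≠ 0 → ∀ l : ℝ, 0 < ‖(l : ℂ) - z‖ := by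
    intro z hz l
    exact norm_pos_iff.mpr (neZ hz l)
  have hu2 : ∀ l, u l ^ 2 = l ^ 2 / ‖(l : ℂ) - z₁‖ ^ 2 := by
    intro l; rw [hu, div_pow, _root_.sq_abs]
  have hv2 : ∀ l, v l ^ 2 = l ^ 2 / ‖(l : ℂ) - z₂‖ ^ 2 := by
    intro l; rw [hv, div_pow, _root_.sq_abs]
  have hcontu : Continuous u :=
    Continuous.div continuous_abs
      (continuous_norm.comp (Complex.continuous_ofReal.sub continuous_const))
      (fun l => ne_of_gt (habs_pos z₁ him₁ l))
  have hcontv : Continuous v :=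
    Continuous.div continuous_abs
      (continuous_norm.comp (Complex.continuous_ofReal.sub continuous_const))
      (fun l => ne_of_gt (habs_pos z₂ him₂ l))
  have hbu : ∀ l, u l ^ 2 ≤ 2 + 2 * z₁.re ^ 2 / z₁.im ^ 2 := by
    intro l
    rw [hu2 l, div_le_iff₀ (pow_pos (norm_pos_iff.mpr (hne₁ l)) 2)]
    exact sq_bound him₁ l
  have hbv : ∀ l, v l ^ 2 ≤ 2 + 2 * z₂.re ^ 2 / z₂.im ^ 2 := by
    intro l
    rw [hv2 l, div_le_iff₀ (pow_pos (norm_pos_iff.mpr (hne₂ l)) 2)]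
    exact sq_bound him₂ l
  have hintu2 : Integrable (fun l => u l ^ 2) H :=
    integrable_of_bdd (hcontu.pow 2) (fun l => by
      rw [Real.norm_of_nonneg (by positivity)]; exact hbu l)
  have hintv2 : Integrable (fun l => v l ^ 2) H :=
    integrable_of_bdd (hcontv.pow 2) (fun l => by
      rw [Real.norm_of_nonneg (by positivity)]; exact hbv l)
  -- the complex integrand
  set F : ℝ → ℂ := fun l => (l : ℂ) ^ 2 / (((l : ℂ) - z₁) * ((l : ℂ) - z₂)) with hF
  have hFuv : ∀ l, ‖F l‖ = u l * v l := by
    intro l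
    rw [hF, hu, hv]
    simp only [norm_div, norm_mul, norm_pow, Complex.norm_real, Real.norm_eq_abs]
    rw [div_mul_div_comm, sq]
  have hcsub1 : Continuous fun l : ℝ => (l : ℂ) - z₁ := Complex.continuous_ofReal.sub continuous_const
  have hcsub2 : Continuous fun l : ℝ => (l : ℂ) - z₂ := Complex.continuous_ofReal.sub continuous_const
  have hcontF : Continuous F := by
    apply Continuous.div (Complex.continuous_ofReal.pow 2) (hcsub1.mul hcsub2)
    intro l
    exact mul_ne_zero (hne₁ l) (hne₂ l)
  have hbF : ∀ l, ‖F l‖ ≤ ((2 + 2 * z₁.re ^ 2 / z₁.im ^ 2) + (2 + 2 * z₂.re ^ 2 / z₂.im ^ 2)) / 2 := by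
    intro l
    rw [hFuv l]
    have h1 := hbu l
    have h2 := hbv l
    nlinarith [sq_nonneg (u l - v l)]
  have hintF : Integrable F H := integrable_of_bdd hcontF hbF
  -- Hölder
  have hconj : Real.HolderConjugate 2 2 := ⟨by norm_num, by norm_num, by norm_num⟩
  have hrpow : ∀ x : ℝ, x ^ (2:ℝ) = x ^ 2 := fun x => by
    rw [show (2:ℝ) = ((2:ℕ):ℝ) by norm_num, Real.rpow_natCast]
  have hmemu : MemLp u (ENNReal.ofReal 2) H := by
    rw [show ENNReal.ofReal 2 = 2 by norm_num]
    exact (memLp_two_iff_integrable_sq hcontu.aestronglyMeasurable).2 hintu2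
  have hmemv : MemLp v (ENNReal.ofReal 2) H := by
    rw [show ENNReal.ofReal 2 = 2 by norm_num]
    exact (memLp_two_iff_integrable_sq hcontv.aestronglyMeasurable).2 hintv2
  have hHolder := integral_mul_le_Lp_mul_Lq_of_nonneg (μ := H) hconj
    (Eventually.of_forall fun l => by positivity)
    (Eventually.of_forall fun l => by positivity) hmemu hmemv
  simp only [hrpow] at hHolder
  have hA₁' : ∫ l, u l ^ 2 ∂H = ∫ l, l ^ 2 / ‖(l : ℂ) - z₁‖ ^ 2 ∂H := by
    congr 1; funext l; exact hu2 l
  have hA₂' : ∫ l, v l ^ 2 ∂H = ∫ l, l ^ 2 / ‖(l : ℂ) - z₂‖ ^ 2 ∂H := by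
    congr 1; funext l; exact hv2 l
  set A₁ := ∫ l, l ^ 2 / ‖(l : ℂ) - z₁‖ ^ 2 ∂H with hA1def
  set A₂ := ∫ l, l ^ 2 / ‖(l : ℂ) - z₂‖ ^ 2 ∂H with hA2def
  have hA₁nn : 0 ≤ A₁ := integral_nonneg fun l => by positivity
  have hA₂nn : 0 ≤ A₂ := integral_nonneg fun l => by positivity
  rw [hA₁', hA₂'] at hHolder
  -- now the final estimate
  have step1 : ‖(c : ℂ) * ∫ l, F l ∂H‖ ≤ c * ∫ l, u l * v l ∂H := by
    rw [norm_mul, Complex.norm_real, Real.norm_eq_abs, abs_of_pos hc]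
    apply mul_le_mul_of_nonneg_left _ (le_of_lt hc)
    calc ‖∫ l, F l ∂H‖ ≤ ∫ l, ‖F l‖ ∂H := by
          exact norm_integral_le_integral_norm _
      _ = ∫ l, u l * v l ∂H := by congr 1; funext l; exact hFuv l
  have step2 : c * ∫ l, u l * v l ∂H ≤ c * (A₁ ^ ((1:ℝ)/2) * A₂ ^ ((1:ℝ)/2)) :=
    mul_le_mul_of_nonneg_left hHolder (le_of_lt hc)
  have step3 : c * (A₁ ^ ((1:ℝ)/2) * A₂ ^ ((1:ℝ)/2)) =
      (c * A₁) ^ ((1:ℝ)/2) * ((c * A₂) ^ ((1:ℝ)/2)) := by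
    have h12 : c ^ ((1:ℝ)/2) * c ^ ((1:ℝ)/2) = c := by
      rw [← Real.rpow_add hc]; norm_num
    rw [Real.mul_rpow (le_of_lt hc) hA₁nn, Real.mul_rpow (le_of_lt hc) hA₂nn,
      mul_mul_mul_comm, h12]
  have hlt₁ : (c * A₁) ^ ((1:ℝ)/2) < 1 :=
    Real.rpow_lt_one (by positivity) hA₁ (by norm_num)
  have hlt₂ : (c * A₂) ^ ((1:ℝ)/2) < 1 :=
    Real.rpow_lt_one (by positivity) hA₂ (by norm_num)
  have hnn₁ : 0 ≤ (c * A₁) ^ ((1:ℝ)/2) := Real.rpow_nonneg (by positivity) _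
  have hnn₂ : 0 ≤ (c * A₂) ^ ((1:ℝ)/2) := Real.rpow_nonneg (by positivity) _
  calc ‖(c : ℂ) * ∫ l, F l ∂H‖ ≤ c * ∫ l, u l * v l ∂H := step1
    _ ≤ (c * A₁) ^ ((1:ℝ)/2) * ((c * A₂) ^ ((1:ℝ)/2)) := by rw [← step3]; exact step2
    _ < 1 := by nlinarith


end
end
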